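/- If φ₁ and φ₂ are right-continuous comparison functions, then φ := max{φ₁, φ₂} is also a right-continuous comparison function; in particular lim_{n→∞} φⁿ(t) = 0 for all t > 0. -/

import Mathlib

open Filter Topology Set

noncomputable section

/-- A semi-metric: symmetric, vanishing exactly on the diagonal (no triangle inequality). -/
def IsSemiMetric {X : Type*} (d : X → X → NNReal) : Prop :=
  (∀ x y, d x y = d y x) ∧ ∀ x y, d x y = 0 ↔ x = y

/-- Ball of radius `r` around `x`. -/
def SMBall {X : Type*} (d : X → X → NNReal) (x : X) (r : NNReal) : Set X := {y | d x y < r}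

/-- The basic triangle function `Φ_d(u,v) = sup{d(x,y) : ∃ z, d(x,z) ≤ u, d(y,z) ≤ v}`. -/
def SMPhi {X : Type*} (d : X → X → NNReal) (u v : NNReal) : ENNReal :=
  ⨆ (p : X × X) (_ : ∃ z : X, d p.1 z ≤ u ∧ d p.2 z ≤ v), (d p.1 p.2 : ENNReal)

/-- Normal property: the basic triangle function is finite-valued. -/
def SMNormal {X : Type*} (d : X → X → NNReal) : Prop := ∀ u v : NNReal, SMPhi d u v < ⊤

/-- Regular property: the basic triangle function is continuous at `(0,0)`. -/
def SMRegular {X : Type*} (d : X → X → NNReal) : Prop :=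
  ∀ ε : NNReal, 0 < ε → ∃ δ : NNReal, 0 < δ ∧
    ∀ u v : NNReal, u ≤ δ → v ≤ δ → SMPhi d u v < (ε : ENNReal)

/-- Cauchy sequence with respect to a semi- or pre-metric. -/
def SMCauchy {X : Type*} (d : X → X → NNReal) (x : ℕ → X) : Prop :=
  ∀ ε : NNReal, 0 < ε → ∃ N : ℕ, ∀ m ≥ N, ∀ n ≥ N, d (x m) (x n) < ε

/-- Completeness: every Cauchy sequence converges. -/
def SMComplete {X : Type*} (d : X → X → NNReal) : Prop :=
  ∀ x : ℕ → X, SMCauchy d x → ∃ l : X, Tendsto (fun n => d (x n) l) atTop (𝓝 0)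

/-- Boundedness: contained in some ball. -/
def SMBounded {X : Type*} (d : X → X → NNReal) (H : Set X) : Prop :=
  ∃ (x₀ : X) (r : NNReal), H ⊆ SMBall d x₀ r

/-- Comparison function: increasing, with iterates tending to zero on `(0,∞)`. -/
def SMComparison (φ : NNReal → NNReal) : Prop :=
  Monotone φ ∧ ∀ t : NNReal, 0 < t → Tendsto (fun n => φ^[n] t) atTop (𝓝 0)

/-- Right-continuity of a function `[0,∞) → [0,∞)`. -/
def SMRightCont (φ : NNReal → NNReal) : Prop :=
  ∀ t : NNReal, ContinuousWithinAt φ (Ici t) t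

/-- Diameter of a set. -/
def SMdiam {X : Type*} (d : X → X → NNReal) (H : Set X) : ENNReal :=
  ⨆ (x ∈ H) (y ∈ H), (d x y : ENNReal)

/-- `r`-neighborhood of a set. -/
def SMnbhd {X : Type*} (d : X → X → NNReal) (A : Set X) (r : NNReal) : Set X :=
  ⋃ x ∈ A, SMBall d x r

/-- Kuratowski measure of non-compactness. -/
def SMchi {X : Type*} (d : X → X → NNReal) (H : Set X) : ENNReal :=
  sInf {c : ENNReal | ∃ r : NNReal, c = (r : ENNReal) ∧ 0 < r ∧
    ∃ s : Finset X, H ⊆ ⋃ x ∈ s, SMBall d x r}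

/-- Hausdorff-Pompeiu distance between subsets. -/
def SMdHP {X : Type*} (d : X → X → NNReal) (A B : Set X) : ENNReal :=
  sInf {c : ENNReal | ∃ r : NNReal, c = (r : ENNReal) ∧ 0 < r ∧
    A ⊆ SMnbhd d B r ∧ B ⊆ SMnbhd d A r}

/-- Open sets of the semi-metric topology. -/
def SMOpen {X : Type*} (d : X → X → NNReal) (U : Set X) : Prop :=
  ∀ x ∈ U, ∃ r : NNReal, 0 < r ∧ SMBall d x r ⊆ U

/-- Closed sets of the semi-metric topology. -/
def SMClosed {X : Type*} (d : X → X → NNReal) (A : Set X) : Prop := SMOpen d Aᶜ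

/-- Max semi-metric on `X^q`. -/
def SMmax {X : Type*} (q : ℕ) (d : X → X → NNReal) (x y : Fin q → X) : NNReal :=
  Finset.univ.sup fun i => d (x i) (y i)


private lemma smcomp_lt (ψ : NNReal → NNReal) (hψ : SMComparison ψ) :
    ∀ t : NNReal, 0 < t → ψ t < t := by
  intro t ht
  by_contra h
  push_neg at h
  have key : ∀ n, t ≤ ψ^[n] t := by
    intro n
    induction n with
    | zero => simp
    | succ n ih =>
      rw [Function.iterate_succ_apply']
      exact le_trans h (hψ.1 ih)
  have hev : ∀ᶠ n in atTop, ψ^[n] t < t :=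
    (hψ.2 t ht).eventually (gt_mem_nhds ht)
  rcases hev.exists with ⟨n, hn⟩
  exact absurd (key n) (not_le.mpr hn)

private lemma smcomp_zero (ψ : NNReal → NNReal) (hψ : SMComparison ψ) : ψ 0 = 0 := by
  by_contra h
  have h0 : 0 < ψ 0 := pos_iff_ne_zero.mpr h
  have h1 : ψ (ψ 0) < ψ 0 := smcomp_lt ψ hψ _ h0
  have h2 : ψ 0 ≤ ψ (ψ 0) := hψ.1 (zero_le : (0:NNReal) ≤ ψ 0)
  exact absurd h2 (not_le.mpr h1)

theorem stmt1 (φ₁ φ₂ : NNReal → NNReal)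
    (h1 : SMComparison φ₁) (h1r : SMRightCont φ₁)
    (h2 : SMComparison φ₂) (h2r : SMRightCont φ₂) :
    SMComparison (fun t => max (φ₁ t) (φ₂ t)) ∧
      SMRightCont (fun t => max (φ₁ t) (φ₂ t)) ∧
      ∀ t : NNReal, 0 < t →
        Tendsto (fun n => (fun s => max (φ₁ s) (φ₂ s))^[n] t) atTop (𝓝 0) := by
  set φ : NNReal → NNReal := fun t => max (φ₁ t) (φ₂ t) with hφdef
  have hmono : Monotone φ := h1.1.max h2.1
  have hrc : SMRightCont φ := fun t => (h1r t).max (h2r t)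
  have hlt : ∀ t : NNReal, 0 < t → φ t < t := fun t ht =>
    max_lt (smcomp_lt φ₁ h1 t ht) (smcomp_lt φ₂ h2 t ht)
  have h0 : φ 0 = 0 := by
    simp [hφdef, smcomp_zero φ₁ h1, smcomp_zero φ₂ h2]
  have hmain : ∀ t : NNReal, 0 < t → Tendsto (fun n => φ^[n] t) atTop (𝓝 0) := by
    intro t ht
    set a : ℕ → NNReal := fun n => φ^[n] t with ha
    have hstep : ∀ n, a (n + 1) ≤ a n := by
      intro n
      have : a (n + 1) = φ (a n) := Function.iterate_succ_apply' φ n t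
      rw [this]
      rcases eq_or_lt_of_le (zero_le : (0:NNReal) ≤ a n) with h | h
      · rw [← h, h0]
      · exact (hlt _ h).le
    have hanti : Antitone a := antitone_nat_of_succ_le hstep
    have htend : Tendsto a atTop (𝓝 (⨅ n, a n)) := tendsto_atTop_ciInf hanti ⟨0, fun x _ => (zero_le : (0:NNReal) ≤ x)⟩
    set L := ⨅ n, a n with hL
    rcases eq_or_lt_of_le (zero_le : (0:NNReal) ≤ L) with hL0 | hL0
    · rwa [← hL0] at htend
    · exfalso
      have hmem : ∀ n, a n ∈ Ici L := by
        intro n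
        rw [mem_Ici, hL]
        exact ciInf_le (OrderBot.bddBelow _) n
      have htend' : Tendsto a atTop (𝓝[Ici L] L) :=
        tendsto_nhdsWithin_of_tendsto_nhds_of_eventually_within a htend
          (Eventually.of_forall hmem)
      have hφa : Tendsto (fun n => φ (a n)) atTop (𝓝 (φ L)) :=
        (hrc L).tendsto.comp htend'
      have hφa' : Tendsto (fun n => φ (a n)) atTop (𝓝 L) := by
        have : (fun n => φ (a n)) = fun n => a (n + 1) := by
          funext n
          exact (Function.iterate_succ_apply' φ n t).symm
        rw [this]
        exact htend.comp (tendsto_add_atTop_nat 1)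
      have : φ L = L := tendsto_nhds_unique hφa hφa'
      exact absurd this (ne_of_lt (hlt L hL0))
  exact ⟨⟨hmono, hmain⟩, hrc, hmain⟩
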